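/- Let ⇀ and ↝ be binary relations on a type α satisfying the local swapping property, and assume ↝ is strongly normalizing on all of α: there is no infinite sequence x₀, x₁, x₂, … with xᵢ ↝ xᵢ₊₁ for all i. Let → = ⇀ ∪ ↝. Then any element a admitting an infinite →-reduction sequence also admits an infinite ⇀-reduction sequence; equivalently, if a is ⇀-strongly normalizing then a is →-strongly normalizing. -/

import Mathlib

/-- claim (b) of Theorem 2. With local swapping and strong
normalization of `↝` (rn), an infinite `→`-reduction from `a` yields an
infinite `⇀`-reduction from `a`, where `→ = ⇀ ∪ ↝`. -/
theorem infinite_union_gives_infinite_surface {α : Type*} (rs rn : α → α → Prop)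
    (hswap : ∀ a b c, rn a b → rs b c →
      (∃ d, Relation.TransGen rs a d ∧ (d = c ∨ rn d c)) ∨
      (∃ d, rs a d ∧ Relation.ReflTransGen rn d c))
    (hsn : ¬ ∃ f : ℕ → α, ∀ i, rn (f i) (f (i + 1))) :
    ∀ a : α,
      (∃ f : ℕ → α, f 0 = a ∧ ∀ i, (rs (f i) (f (i + 1)) ∨ rn (f i) (f (i + 1)))) →
      ∃ g : ℕ → α, g 0 = a ∧ ∀ i, rs (g i) (g (i + 1)) := by
  classical
  set u : α → α → Prop := fun x y => rs x y ∨ rn x y with hu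
  set P : α → Prop :=
    fun a => ∃ f : ℕ → α, f 0 = a ∧ ∀ i, u (f i) (f (i + 1)) with hP
  -- prepend a single union step to an infinite union sequence
  have prepend1 : ∀ x y, u x y → P y → P x := by
    rintro x y hxy ⟨f, hf0, hstep⟩
    refine ⟨fun n => Nat.casesOn n x f, rfl, ?_⟩
    intro i
    cases i with
    | zero => simpa [hf0] using hxy
    | succ n => exact hstep n
  -- prepend a finite union path
  have prependStar : ∀ x y, Relation.ReflTransGen u x y → P y → P x := by
    intro x y h
    induction h using Relation.ReflTransGen.head_induction_on with
    | refl => exact id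
    | head hxz _ ih => exact fun hy => prepend1 _ _ hxz (ih hy)
  -- swap a single rn step past a single rs step
  have K : ∀ a b c, rn a b → rs b c →
      ∃ d, rs a d ∧ Relation.ReflTransGen u d c := by
    intro a b c hab hbc
    rcases hswap a b c hab hbc with ⟨d, hd, hdc⟩ | ⟨d, hd, hdc⟩
    · obtain ⟨e, hae, hed⟩ := Relation.TransGen.head'_iff.mp hd
      refine ⟨e, hae, ?_⟩
      have hed' : Relation.ReflTransGen u e d := Relation.ReflTransGen.mono (fun x y h => Or.inl h) _ _ hed
      rcases hdc with rfl | hdc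
      · exact hed'
      · exact hed'.tail (Or.inr hdc)
    · exact ⟨d, hd, Relation.ReflTransGen.mono (fun x y h => Or.inr h) _ _ hdc⟩
  -- swap an rn* prefix past a single rs step
  have L : ∀ a b c, Relation.ReflTransGen rn a b → rs b c →
      ∃ d, rs a d ∧ Relation.ReflTransGen u d c := by
    intro a b c hab
    induction hab using Relation.ReflTransGen.head_induction_on with
    | refl => exact fun hbc => ⟨c, hbc, Relation.ReflTransGen.refl⟩
    | head hxz _ ih =>
      intro hbc
      obtain ⟨d, hd, hdc⟩ := ih hbc
      obtain ⟨e, he, hed⟩ := K _ _ _ hxz hd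
      exact ⟨e, he, hed.trans hdc⟩
  -- main step: from any P point there is an rs step preserving P
  have step : ∀ a, P a → ∃ b, rs a b ∧ P b := by
    rintro a ⟨f, hf0, hstep⟩
    have hex : ∃ k, rs (f k) (f (k + 1)) := by
      by_contra h
      push_neg at h
      exact hsn ⟨f, fun i => (hstep i).resolve_left (h i)⟩
    set k := Nat.find hex with hkdef
    have hk : rs (f k) (f (k + 1)) := Nat.find_spec hex
    have hforall : ∀ j < k, rn (f j) (f (j + 1)) := fun j hj =>
      (hstep j).resolve_left (Nat.find_min hex hj)
    have hstar : ∀ m, m ≤ k → Relation.ReflTransGen rn (f 0) (f m) := by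
      intro m
      induction m with
      | zero => exact fun _ => Relation.ReflTransGen.refl
      | succ n ih =>
        intro h
        exact (ih (Nat.le_of_succ_le h)).tail (hforall n (Nat.lt_of_succ_le h))
    obtain ⟨d, had, hdc⟩ := L (f 0) (f k) (f (k + 1)) (hstar k le_rfl) hk
    have hPd : P d :=
      prependStar _ _ hdc ⟨fun i => f (k + 1 + i), rfl, fun i => hstep (k + 1 + i)⟩
    rw [hf0] at had
    exact ⟨d, had, hPd⟩
  -- iterate via choice
  intro a ha
  have key : ∀ x : { y // P y }, ∃ z : { y // P y }, rs x.1 z.1 := by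
    rintro ⟨x, hx⟩
    obtain ⟨b, hb, hPb⟩ := step x hx
    exact ⟨⟨b, hPb⟩, hb⟩
  choose F hF using key
  refine ⟨fun n => (F^[n] ⟨a, ha⟩).1, by simp, ?_⟩
  intro i
  show rs (F^[i] ⟨a, ha⟩).1 (F^[i + 1] ⟨a, ha⟩).1
  rw [Function.iterate_succ_apply']
  exact hF _
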